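/- arXiv:2603.14508 — 7 statements merged into one kernel-verified Lean document; each statement's English description precedes it below -/
import Mathlib

section
/- For every permutation p of {1,...,n} with n >= 1, A(p) + B(p) + C(p) + D(p) + E(p) = n + 1, i.e., the five gap types partition the n+1 insertion gaps of p. -/
open List
open scoped Classical

/-- adjacent pairs of a list -/
def pairs (l : List ℕ) : List (ℕ × ℕ) := l.zip l.tail

/-- `l` is a permutation (as a word) of `{1, ..., n}` -/
def IsPermOf (n : ℕ) (l : List ℕ) : Prop := l.Perm (List.range' 1 n)

def T1 (l : List ℕ) : ℕ := (pairs l).countP (fun q => decide (q.2 < q.1 ∧ Odd q.1 ∧ Even q.2))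
def T2 (l : List ℕ) : ℕ := (pairs l).countP (fun q => decide (q.1 < q.2 ∧ Odd q.1 ∧ Odd q.2))
def T3 (l : List ℕ) : ℕ := (pairs l).countP (fun q => decide (q.2 < q.1 ∧ Odd q.1 ∧ Odd q.2))
def S10 (l : List ℕ) : ℕ := (pairs l).countP (fun q => decide (q.2 < q.1 ∧ Odd q.1))
def S12 (l : List ℕ) : ℕ := (pairs l).countP (fun q => decide (Odd q.1 ∧ Odd q.2))

/-- largest `i` such that the values `1, ..., i` appear in left-to-right order in `l` -/
def S17 (l : List ℕ) : ℕ :=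
  Nat.findGreatest (fun i => ∀ j < i, 1 ≤ j → l.idxOf j < l.idxOf (j + 1)) l.length

def statA (l : List ℕ) : ℕ :=
  (pairs l).countP (fun q => decide (Even q.1 ∧ Even q.2)) + (if Even (l.headD 1) then 1 else 0)
def statB (l : List ℕ) : ℕ :=
  (pairs l).countP (fun q => decide (q.2 < q.1 ∧ Odd q.1)) + (if Odd (l.getLastD 0) then 1 else 0)
def statC (l : List ℕ) : ℕ :=
  (pairs l).countP (fun q => decide ((Even q.1 ∧ Odd q.2) ∨ (q.1 < q.2 ∧ Odd q.1 ∧ Odd q.2))) +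
    (if Odd (l.headD 0) then 1 else 0)
def statD (l : List ℕ) : ℕ :=
  (pairs l).countP (fun q => decide (q.1 < q.2 ∧ Odd q.1 ∧ Even q.2))
def statE (l : List ℕ) : ℕ := if Even (l.getLastD 1) then 1 else 0

/-- the `i`-th entry of `l` (0-indexed), default 0 -/
def entry (l : List ℕ) (i : ℕ) : ℕ := l.getD i 0

/-- inserting `m` at gap `j` of `l` -/
def insertGap (l : List ℕ) (j : ℕ) (m : ℕ) : List ℕ := l.take j ++ m :: l.drop j

def IsAGap (l : List ℕ) (j : ℕ) : Prop :=
  (j = 0 ∧ Even (l.headD 1)) ∨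
  (1 ≤ j ∧ j < l.length ∧ Even (entry l (j - 1)) ∧ Even (entry l j))

def IsBGap (l : List ℕ) (j : ℕ) : Prop :=
  (1 ≤ j ∧ j < l.length ∧ entry l j < entry l (j - 1) ∧ Odd (entry l (j - 1))) ∨
  (j = l.length ∧ Odd (l.getLastD 0))

def IsCGap (l : List ℕ) (j : ℕ) : Prop :=
  (j = 0 ∧ Odd (l.headD 0)) ∨
  (1 ≤ j ∧ j < l.length ∧ ((Even (entry l (j - 1)) ∧ Odd (entry l j)) ∨
    (entry l (j - 1) < entry l j ∧ Odd (entry l (j - 1)) ∧ Odd (entry l j))))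

def IsDGap (l : List ℕ) (j : ℕ) : Prop :=
  1 ≤ j ∧ j < l.length ∧ entry l (j - 1) < entry l j ∧ Odd (entry l (j - 1)) ∧ Even (entry l j)

def IsEGap (l : List ℕ) (j : ℕ) : Prop := j = l.length ∧ Even (l.getLastD 1)

/-- the word `p_1 p_2 ... p_n` (values in `{1,...,n}`) of a permutation of `Fin n` -/
def word (n : ℕ) (p : Equiv.Perm (Fin n)) : List ℕ := List.ofFn (fun i => (p i : ℕ) + 1)


lemma count_sum_aux (L : List (ℕ × ℕ)) (h : ∀ q ∈ L, q.1 ≠ q.2) :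
    L.countP (fun q => decide (Even q.1 ∧ Even q.2)) +
    L.countP (fun q => decide (q.2 < q.1 ∧ Odd q.1)) +
    L.countP (fun q => decide ((Even q.1 ∧ Odd q.2) ∨ (q.1 < q.2 ∧ Odd q.1 ∧ Odd q.2))) +
    L.countP (fun q => decide (q.1 < q.2 ∧ Odd q.1 ∧ Even q.2)) = L.length := by
  induction L with
  | nil => simp
  | cons a t ih =>
    have h1 : a.1 ≠ a.2 := h a List.mem_cons_self
    have h1' : a.1 % 2 = a.1 % 2 := rfl
    simp only [List.countP_cons, decide_eq_true_eq, List.length_cons, Nat.even_iff,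
      Nat.odd_iff] at *
    have := ih (fun q hq => h q (List.mem_cons_of_mem _ hq))
    split_ifs <;> omega

lemma pairs_ne : ∀ (l : List ℕ), l.Nodup → ∀ q ∈ pairs l, q.1 ≠ q.2
  | [], _, q, hq => by simp [pairs] at hq
  | [a], _, q, hq => by simp [pairs] at hq
  | a :: b :: t, h, q, hq => by
    simp only [pairs, List.tail_cons, List.zip_cons_cons, List.mem_cons] at hq
    rcases hq with rfl | hq
    · have : a ≠ b := by
        intro he; exact (List.nodup_cons.mp h).1 (he ▸ List.mem_cons_self)
      exact this
    · exact pairs_ne (b :: t) (List.nodup_cons.mp h).2 q hq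

theorem stmt2 (n : ℕ) (hn : 1 ≤ n) (l : List ℕ) (hl : IsPermOf n l) :
    statA l + statB l + statC l + statD l + statE l = n + 1 := by
  have hlen : l.length = n := by
    have := hl.length_eq; simpa using this
  have hne : l ≠ [] := by
    intro h; rw [h] at hlen; simp at hlen; omega
  obtain ⟨x, t, rfl⟩ := List.exists_cons_of_ne_nil hne
  have hnd : (x :: t).Nodup := hl.nodup_iff.mpr (by exact List.nodup_range' (s := 1) (n := n))
  have hpairs := count_sum_aux (pairs (x :: t)) (pairs_ne _ hnd)
  have hplen : (pairs (x :: t)).length = n - 1 := by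
    simp [pairs, List.length_zip] at hlen ⊢; omega
  rw [hplen] at hpairs
  set m := (x :: t).getLast (by simp) with hm
  have hgl0 : (x :: t).getLastD 0 = m := by
    rw [List.getLastD_eq_getLast?, List.getLast?_eq_getLast (by simp : x :: t ≠ [])]; simp [hm]
  have hgl1 : (x :: t).getLastD 1 = m := by
    rw [List.getLastD_eq_getLast?, List.getLast?_eq_getLast (by simp : x :: t ≠ [])]; simp [hm]
  have hhead : ((if Even ((x :: t).headD 1) then 1 else 0) : ℕ) +
      (if Odd ((x :: t).headD 0) then 1 else 0) = 1 := by
    have h2 := Nat.mod_two_eq_zero_or_one x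
    simp only [List.headD_cons, Nat.even_iff, Nat.odd_iff]
    split_ifs <;> omega
  have hlast : ((if Odd ((x :: t).getLastD 0) then 1 else 0) : ℕ) +
      (if Even ((x :: t).getLastD 1) then 1 else 0) = 1 := by
    rw [hgl0, hgl1]
    have h2 := Nat.mod_two_eq_zero_or_one m
    simp only [Nat.even_iff, Nat.odd_iff]
    split_ifs <;> omega
  unfold statA statB statC statD statE
  omega
end

section
/- Let n be even and let p be a permutation of {1,...,n}. If q is obtained from p by inserting the odd value n+1 into any gap (at the start, between two adjacent entries, or at the end), then B(q) = B(p) + 1 - [the inserted gap was a B-gap], C(q) = C(p) + 1 - [the inserted gap was a C-gap], A(q) = A(p) - [the inserted gap was an A-gap], D(q) = D(p) - [the inserted gap was a D-gap], and E(q) = E(p) - [the inserted gap was the E-gap]. -/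
open List
open scoped Classical

lemma pairs_cons₂ (x y : ℕ) (s : List ℕ) : pairs (x::y::s) = (x,y) :: pairs (y::s) := rfl

lemma pairs_one (a : ℕ) : pairs [a] = [] := rfl

lemma pairs_append_cons (t : List ℕ) (a : ℕ) (r : List ℕ) :
    pairs (t ++ a :: r) = pairs (t ++ [a]) ++ pairs (a :: r) := by
  induction t with
  | nil => simp [pairs]
  | cons x t ih =>
    cases t with
    | nil => simp [pairs]
    | cons y t' =>
      simp only [List.cons_append] at *
      rw [pairs_cons₂, pairs_cons₂, ih]
      rfl

lemma headD_ac (t : List ℕ) (a : ℕ) (r r' : List ℕ) (d : ℕ) :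
    (t ++ a :: r).headD d = (t ++ a :: r').headD d := by cases t <;> rfl

lemma getLastD_ac (t : List ℕ) (a : ℕ) (r : List ℕ) (d : ℕ) :
    (t ++ a :: r).getLastD d = r.getLastD a := by
  induction t generalizing d with
  | nil => rw [List.nil_append, List.getLastD_cons]
  | cons x t ih => rw [List.cons_append, List.getLastD_cons, ih]

set_option maxHeartbeats 1000000 in
theorem stmt6 (n : ℕ) (hn : Even n) (l : List ℕ) (hl : IsPermOf n l) (j : ℕ) (hj : j ≤ n)
    (q : List ℕ) (hq : q = insertGap l j (n + 1)) :
    statB q = statB l + 1 - (if IsBGap l j then 1 else 0) ∧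
    statC q = statC l + 1 - (if IsCGap l j then 1 else 0) ∧
    statA q = statA l - (if IsAGap l j then 1 else 0) ∧
    statD q = statD l - (if IsDGap l j then 1 else 0) ∧
    statE q = statE l - (if IsEGap l j then 1 else 0) := by
  subst hq
  have hodd : Odd (n + 1) := Even.add_one hn
  have heven : ¬ Even (n + 1) := Nat.not_even_iff_odd.mpr hodd
  have hlen : l.length = n := by simpa using hl.length_eq
  have hmem : ∀ x ∈ l, 1 ≤ x ∧ x < n + 1 := by
    intro x hx
    have := (hl.mem_iff).mp hx
    have := List.mem_range'_1.mp this
    omega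
  rcases l with _ | ⟨h, rest⟩
  · -- l = []
    have hn0 : n = 0 := by simpa using hlen.symm
    subst hn0
    have hj0 : j = 0 := by omega
    subst hj0
    simp [insertGap, statA, statB, statC, statD, statE, IsAGap, IsBGap, IsCGap, IsDGap,
      IsEGap, pairs, entry]
  · set l := h :: rest with hldef
    rcases Nat.eq_zero_or_pos j with hj0 | hj1
    · -- j = 0
      subst hj0
      have hh := hmem h (by simp [hldef])
      have hq' : insertGap l 0 (n + 1) = (n + 1) :: h :: rest := rfl
      rw [hq', hldef]
      have hnlt : ¬ (n + 1 < h) := by omega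
      have hne0 : ¬ (0 = (h :: rest).length) := by simp
      simp only [statA, statB, statC, statD, statE, IsAGap, IsBGap, IsCGap, IsDGap, IsEGap,
        pairs_cons₂, List.countP_cons, List.getLastD_cons, List.headD_cons, decide_eq_true_eq,
        List.length_cons, entry]
      simp [hodd, heven, hh.2, hnlt]
      split_ifs <;> grind
    · rcases Nat.lt_or_ge j l.length with hjl | hjge
      · -- middle: 1 ≤ j < l.length
        clear hldef
        have hj1l : j - 1 < l.length := by omega
        have hjne : ¬ (j = l.length) := by omega
        have hjne0 : ¬ (j = 0) := by omega
        have hj1' : 1 ≤ j := hj1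
        set a := entry l (j - 1) with ha
        set b := entry l j with hb
        have haL : a ∈ l := by
          rw [ha, entry, List.getD_eq_getElem l 0 hj1l]; exact List.getElem_mem _
        have hbL : b ∈ l := by
          rw [hb, entry, List.getD_eq_getElem l 0 hjl]; exact List.getElem_mem _
        have haa := hmem a haL
        have hbb := hmem b hbL
        have hlt1 : ¬ (n + 1 < a) := by omega
        have hlt2 : ¬ (n + 1 < b) := by omega
        have heo : Even a ∨ Odd a := Nat.even_or_odd a
        obtain ⟨t, d, hldec, hqdec⟩ : ∃ t d, l = t ++ a :: b :: d ∧
            insertGap l j (n + 1) = t ++ a :: (n + 1) :: b :: d := by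
          refine ⟨l.take (j - 1), l.drop (j + 1), ?_, ?_⟩
          · have h1 : j - 1 + 1 = j := by omega
            conv_lhs => rw [← List.take_append_drop (j - 1) l]
            rw [List.drop_eq_getElem_cons hj1l, h1, List.drop_eq_getElem_cons hjl]
            rw [ha, hb, entry, entry, List.getD_eq_getElem l 0 hj1l,
              List.getD_eq_getElem l 0 hjl]
          · rw [insertGap]
            have h1 : j - 1 + 1 = j := by omega
            have hta : l.take j = l.take (j - 1) ++ [a] := by
              rw [← h1, List.take_succ, List.getElem?_eq_getElem hj1l, ha, entry,
                List.getD_eq_getElem l 0 hj1l]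
              rfl
            rw [hta, List.drop_eq_getElem_cons hjl, hb, entry,
              List.getD_eq_getElem l 0 hjl]
            simp
        have hBiff : IsBGap l j ↔ (b < a ∧ Odd a) := by
          simp [IsBGap, hj1', hjl, hjne, ← ha, ← hb]
        have hCiff : IsCGap l j ↔ ((Even a ∧ Odd b) ∨ (a < b ∧ Odd a ∧ Odd b)) := by
          simp [IsCGap, hj1', hjl, hjne0, ← ha, ← hb]
        have hAiff : IsAGap l j ↔ (Even a ∧ Even b) := by
          simp [IsAGap, hj1', hjl, hjne0, ← ha, ← hb]
        have hDiff : IsDGap l j ↔ (a < b ∧ Odd a ∧ Even b) := by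
          simp [IsDGap, hj1', hjl, ← ha, ← hb]
        have hEiff : ¬ IsEGap l j := by simp [IsEGap, hjne]
        simp only [hEiff, if_false]
        rw [if_congr hBiff rfl rfl, if_congr hCiff rfl rfl, if_congr hAiff rfl rfl,
          if_congr hDiff rfl rfl]
        rw [hqdec]
        conv_lhs => rw [hldec]
        conv_rhs => rw [hldec]
        simp only [statA, statB, statC, statD, statE]
        rw [pairs_append_cons t a ((n+1) :: b :: d), pairs_append_cons t a (b :: d)]
        simp only [List.countP_append, pairs_cons₂, List.countP_cons, decide_eq_true_eq,
          getLastD_ac, List.getLastD_cons]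
        rw [headD_ac t a ((n+1) :: b :: d) (b :: d) 1, headD_ac t a ((n+1) :: b :: d) (b :: d) 0]
        simp only [hodd, heven, hlt1, hlt2, heo, haa.2, hbb.2, and_true, true_and, and_false,
          false_and, if_false, if_true, or_false, false_or, not_false_eq_true, iff_true]
        refine ⟨?_, ?_, ?_, ?_, ?_⟩ <;> (try split_ifs) <;> omega
      · -- j = l.length
        have hjeq : j = l.length := by omega
        subst hjeq
        obtain ⟨l', z, hlz⟩ : ∃ l' z, l = l' ++ [z] := by
          rcases List.eq_nil_or_concat l with h' | ⟨l', z, h'⟩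
          · simp [hldef] at h'
          · exact ⟨l', z, by simpa using h'⟩
        clear hldef
        have hz := hmem z (by rw [hlz]; simp)
        have hq' : insertGap l l.length (n + 1) = l' ++ z :: [n + 1] := by
          rw [insertGap, List.take_length, List.drop_length, hlz]
          simp
        have hlz' : l = l' ++ z :: ([] : List ℕ) := hlz
        have hnlt : ¬ (n + 1 < z) := by omega
        have hlen' : ¬ ((l' ++ [z]).length = 0) := by simp
        have heoz : Even z ∨ Odd z := Nat.even_or_odd z
        have hBiff : IsBGap l l.length ↔ Odd z := by
          rw [hlz]
          simp [IsBGap, getLastD_ac]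
        have hCiff : ¬ IsCGap l l.length := by
          rw [hlz]
          simp [IsCGap]
        have hAiff : ¬ IsAGap l l.length := by
          rw [hlz]
          simp [IsAGap]
        have hDiff : ¬ IsDGap l l.length := by
          rw [hlz]
          simp [IsDGap]
        have hEiff : IsEGap l l.length ↔ Even z := by
          rw [hlz]
          simp [IsEGap, getLastD_ac]
        simp only [hCiff, hAiff, hDiff, if_false]
        rw [if_congr hBiff rfl rfl, if_congr hEiff rfl rfl, hq', hlz']
        simp only [statA, statB, statC, statD, statE]
        rw [pairs_append_cons l' z [n + 1]]
        simp only [List.countP_append, pairs_cons₂, pairs_one, List.countP_cons,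
          List.countP_nil, decide_eq_true_eq, getLastD_ac, List.getLastD_cons,
          List.getLastD_nil]
        rw [headD_ac l' z [n + 1] [] 1, headD_ac l' z [n + 1] [] 0]
        simp only [hodd, heven, hnlt, hz.2, heoz, and_true, true_and, and_false, false_and,
          if_false, if_true, or_false, false_or]
        refine ⟨?_, ?_, ?_, ?_, ?_⟩ <;> (try split_ifs) <;> omega
end

section
/- Let n be even, let p be a permutation of {1,...,n}, and let q be obtained from p by inserting n+1 into an A-gap of p. Then T1(q) = T1(p) + 1, T2(q) = T2(p), and T3(q) = T3(p). -/
open List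
open scoped Classical

lemma pairs_cons_cons (x y : ℕ) (r : List ℕ) :
    pairs (x :: y :: r) = (x, y) :: pairs (y :: r) := rfl

lemma countP_insert (P : ℕ × ℕ → Bool) (t r : List ℕ) (a m b : ℕ) :
    ((pairs (t ++ a :: m :: b :: r)).countP P) + (P (a, b)).toNat
      = ((pairs (t ++ a :: b :: r)).countP P) + (P (a, m)).toNat + (P (m, b)).toNat := by
  induction t with
  | nil =>
      simp only [List.nil_append, pairs_cons_cons, List.countP_cons]
      cases P (a,b) <;> cases P (a,m) <;> cases P (m,b) <;> simp
  | cons c t ih =>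
      cases t with
      | nil =>
          simp only [List.cons_append, List.nil_append, pairs_cons_cons,
            List.countP_cons] at ih ⊢
          omega
      | cons d t' =>
          simp only [List.cons_append, pairs_cons_cons, List.countP_cons] at ih ⊢
          omega

theorem stmt7 (n : ℕ) (hn : Even n) (l : List ℕ) (hl : IsPermOf n l) (j : ℕ) (hj : j ≤ n)
    (hgap : IsAGap l j) (q : List ℕ) (hq : q = insertGap l j (n + 1)) :
    T1 q = T1 l + 1 ∧ T2 q = T2 l ∧ T3 q = T3 l := by
  have hm : Odd (n + 1) := Even.add_one hn
  have hlen : l.length = n := by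
    have := hl.length_eq; simpa using this
  have hle : ∀ x ∈ l, x ≤ n := by
    intro x hx
    have := hl.mem_iff.mp hx
    simp [List.mem_range'] at this
    omega
  rcases hgap with ⟨hj0, hhead⟩ | ⟨hj1, hjlt, ha, hb⟩
  · -- j = 0
    subst hj0
    cases l with
    | nil => simp [Nat.even_iff] at hhead
    | cons h rest =>
      have hh : h ≤ n := hle h (by simp)
      have hq' : q = (n + 1) :: h :: rest := by simpa [insertGap] using hq
      subst hq'
      have hoh : ¬ Odd h := by simpa [Nat.not_odd_iff_even] using hhead
      refine ⟨?_, ?_, ?_⟩ <;>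
        simp [T1, T2, T3, pairs_cons_cons, List.countP_cons, hm, hhead, hoh, Nat.lt_succ_of_le hh]
  · -- 1 ≤ j < l.length
    have hj1' : j - 1 < l.length := by omega
    set a := l[j - 1]'hj1' with hadef
    set b := l[j]'hjlt with hbdef
    have hea : Even a := by
      have : entry l (j - 1) = a := by simp [entry, List.getD_eq_getElem, hj1', hadef]
      rwa [this] at ha
    have heb : Even b := by
      have : entry l j = b := by simp [entry, List.getD_eq_getElem, hjlt, hbdef]
      rwa [this] at hb
    have hbl : b ≤ n := hle b (List.getElem_mem _)
    set t := l.take (j - 1) with htdef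
    set r := l.drop (j + 1) with hrdef
    have hdecomp : l = t ++ a :: b :: r := by
      conv_lhs => rw [← List.take_append_drop (j - 1) l]
      congr 1
      rw [List.drop_eq_getElem_cons hj1']
      congr 1
      rw [show j - 1 + 1 = j from by omega, List.drop_eq_getElem_cons hjlt]
    have h1 : l.take j = t ++ [a] := by
      rw [show j = (j - 1) + 1 from by omega, List.take_succ, List.getElem?_eq_getElem hj1']
      simp [htdef, hadef]
    have h2 : l.drop j = b :: r := List.drop_eq_getElem_cons hjlt
    have hqdecomp : q = t ++ a :: (n + 1) :: b :: r := by
      rw [hq, insertGap, h1, h2]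
      simp
    have hoa : ¬ Odd a := by simpa [Nat.not_odd_iff_even] using hea
    have hob : ¬ Odd b := by simpa [Nat.not_odd_iff_even] using heb
    refine ⟨?_, ?_, ?_⟩
    · have := countP_insert (fun q => decide (q.2 < q.1 ∧ Odd q.1 ∧ Even q.2)) t r a (n+1) b
      rw [← hdecomp, ← hqdecomp] at this
      simp [hoa, hob, hm, heb, Nat.lt_succ_of_le hbl] at this
      simpa [T1, T2, T3] using this
    · have := countP_insert (fun q => decide (q.1 < q.2 ∧ Odd q.1 ∧ Odd q.2)) t r a (n+1) b
      rw [← hdecomp, ← hqdecomp] at this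
      simp [hoa, hob] at this
      simpa [T2] using this
    · have := countP_insert (fun q => decide (q.2 < q.1 ∧ Odd q.1 ∧ Odd q.2)) t r a (n+1) b
      rw [← hdecomp, ← hqdecomp] at this
      simp [hoa, hob] at this
      simpa [T3] using this
end

section
/- Let n be odd, let p be a permutation of {1,...,n}, and let q be obtained from p by inserting the even value n+1 into a T1-gap of p (a position i with p_i > p_{i+1}, p_i odd, p_{i+1} even). Then A(q) = A(p) + 1, B(q) = B(p) - 1, D(q) = D(p) + 1, C(q) = C(p), and E(q) = E(p). -/
open List
open scoped Classical

lemma pairs_cons2 (a b : ℕ) (r : List ℕ) : pairs (a :: b :: r) = (a, b) :: pairs (b :: r) := rfl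

lemma pairs_split (s : List ℕ) (x : ℕ) (t : List ℕ) :
    pairs (s ++ x :: t) = pairs (s ++ [x]) ++ pairs (x :: t) := by
  induction s with
  | nil => simp [pairs]
  | cons a s ih =>
    cases s with
    | nil => simp [pairs_cons2, pairs]
    | cons b s' =>
      simp only [cons_append, pairs_cons2] at *
      rw [ih]

lemma countP_key (u : List ℕ) (x m y : ℕ) (v : List ℕ) (f : ℕ × ℕ → Bool) :
    (pairs (u ++ x :: m :: y :: v)).countP f + (if f (x, y) then 1 else 0)
      = (pairs (u ++ x :: y :: v)).countP f
        + (if f (x, m) then 1 else 0) + (if f (m, y) then 1 else 0) := by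
  rw [pairs_split u x (m :: y :: v), pairs_split u x (y :: v), pairs_cons2, pairs_cons2,
    pairs_cons2]
  simp only [countP_append, countP_cons]
  by_cases h1 : f (x, y) <;> by_cases h2 : f (x, m) <;> by_cases h3 : f (m, y) <;>
    simp [h1, h2, h3] <;> omega

lemma lastD_app (s : List ℕ) (y : ℕ) (v : List ℕ) :
    ∀ d, (s ++ y :: v).getLastD d = (y :: v).getLastD d := by
  induction s with
  | nil => simp
  | cons a s ih =>
    intro d
    rw [cons_append, List.getLastD_cons, ih, List.getLastD_cons, List.getLastD_cons]

theorem stmt9 (n : ℕ) (hn : Odd n) (l : List ℕ) (hl : IsPermOf n l) (j : ℕ)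
    (hj1 : 1 ≤ j) (hj2 : j < n)
    (hgap : entry l j < entry l (j - 1) ∧ Odd (entry l (j - 1)) ∧ Even (entry l j))
    (q : List ℕ) (hq : q = insertGap l j (n + 1)) :
    statA q = statA l + 1 ∧ statB q = statB l - 1 ∧ statD q = statD l + 1 ∧
    statC q = statC l ∧ statE q = statE l := by
  have hlen : l.length = n := hl.length_eq.trans (by simp)
  obtain ⟨hlt, hxodd, hyeven⟩ := hgap
  have hj2' : j < l.length := hlen ▸ hj2
  have hj1' : j - 1 < l.length := lt_of_le_of_lt (Nat.sub_le _ _) hj2'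
  set x := entry l (j - 1) with hxdef
  set y := entry l j with hydef
  have hxg : x = l[j-1] := by rw [hxdef, entry, List.getD_eq_getElem l 0 hj1']
  have hyg : y = l[j] := by rw [hydef, entry, List.getD_eq_getElem l 0 hj2']
  set u := l.take (j - 1) with hudef
  set v := l.drop (j + 1) with hvdef
  have hdropj : l.drop j = y :: v := by
    rw [hyg, hvdef, List.drop_eq_getElem_cons hj2']
  have hdropj1 : l.drop (j - 1) = x :: y :: v := by
    rw [hxg, List.drop_eq_getElem_cons hj1', show j - 1 + 1 = j by omega, hdropj]
  have hl' : l = u ++ x :: y :: v := by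
    conv_lhs => rw [← List.take_append_drop (j - 1) l]
    rw [hdropj1]
  have htake : l.take j = u ++ [x] := by
    have := List.take_append_drop (j - 1) (l.take j)
    rw [List.take_take, min_eq_left (by omega), List.drop_take] at this
    rw [← this, show j - (j - 1) = 1 by omega]
    congr 1
    rw [List.take_one, hdropj1]
    rfl
  have hq' : q = u ++ x :: (n + 1) :: y :: v := by
    rw [hq, insertGap, htake, hdropj]
    simp
  -- basic facts
  have hmemx : x ∈ List.range' 1 n := hl.subset (hxg ▸ List.getElem_mem hj1')
  have hmemy : y ∈ List.range' 1 n := hl.subset (hyg ▸ List.getElem_mem hj2')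
  have hxn : x < n + 1 := by
    have := List.mem_range'_1.mp hmemx; omega
  have hyn : y < n + 1 := by
    have := List.mem_range'_1.mp hmemy; omega
  have hne : Even (n + 1) := hn.add_one
  have hnodd : ¬ Odd (n + 1) := by simpa using hne
  have hxe : ¬ Even x := Nat.not_even_iff_odd.mpr hxodd
  have hyo : ¬ Odd y := Nat.not_odd_iff_even.mpr hyeven
  have key : ∀ f : ℕ × ℕ → Bool,
      (pairs q).countP f + (if f (x, y) then 1 else 0)
        = (pairs l).countP f + (if f (x, n + 1) then 1 else 0)
          + (if f (n + 1, y) then 1 else 0) := by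
    intro f
    rw [hq', hl']
    exact countP_key u x (n + 1) y v f
  have hhead : ∀ d, q.headD d = l.headD d := by
    intro d; rw [hq', hl']; cases u <;> simp
  have hlast : ∀ d, q.getLastD d = l.getLastD d := by
    intro d
    rw [hq', hl', show u ++ x :: (n+1) :: y :: v = (u ++ [x, n+1]) ++ y :: v by simp,
      show u ++ x :: y :: v = (u ++ [x]) ++ y :: v by simp, lastD_app, lastD_app]
  refine ⟨?_, ?_, ?_, ?_, ?_⟩
  · have := key (fun q => decide (Even q.1 ∧ Even q.2))
    simp only [decide_eq_true_eq, hxe, hne, hyeven, false_and, and_true, if_false, if_true,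
      and_self, true_and] at this
    simp only [statA, hhead]
    omega
  · have := key (fun q => decide (q.2 < q.1 ∧ Odd q.1))
    simp only [decide_eq_true_eq] at this
    rw [if_pos ⟨hlt, hxodd⟩, if_neg (by omega : ¬ (n + 1 < x ∧ Odd x)),
      if_neg (by simp [hnodd] : ¬ (y < n + 1 ∧ Odd (n + 1)))] at this
    simp only [statB, hlast]
    omega
  · have := key (fun q => decide (q.1 < q.2 ∧ Odd q.1 ∧ Even q.2))
    simp only [decide_eq_true_eq] at this
    rw [if_neg (by omega : ¬ (x < y ∧ Odd x ∧ Even y)),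
      if_pos ⟨hxn, hxodd, hne⟩,
      if_neg (by omega : ¬ (n + 1 < y ∧ Odd (n + 1) ∧ Even y))] at this
    simp only [statD]
    omega
  · have := key (fun q => decide ((Even q.1 ∧ Odd q.2) ∨ (q.1 < q.2 ∧ Odd q.1 ∧ Odd q.2)))
    simp only [decide_eq_true_eq] at this
    rw [if_neg (by tauto), if_neg (by tauto), if_neg (by tauto)] at this
    simp only [statC, hhead]
    omega
  · simp only [statE, hlast]
end

section
/- Let n be odd, let p be a permutation of {1,...,n}, and let q be obtained from p by inserting n+1 into a T3-gap of p (a position i with p_i > p_{i+1}, both odd). Then B(q) = B(p) - 1, C(q) = C(p) + 1, D(q) = D(p) + 1, A(q) = A(p), and E(q) = E(p). -/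
open List
open scoped Classical

lemma pairs_append_mid : ∀ (u v : List ℕ) (a b : ℕ),
    u.getLast? = some a → v.head? = some b →
    pairs (u ++ v) = pairs u ++ (a, b) :: pairs v
  | [], _, _, _, h, _ => by simp at h
  | [x], v, a, b, hu, hv => by
      obtain ⟨v', rfl⟩ : ∃ v', v = b :: v' := by
        cases v with
        | nil => simp at hv
        | cons c v' => exact ⟨v', by simp at hv; rw [hv]⟩
      simp at hu
      subst hu
      rfl
  | x :: y :: u', v, a, b, hu, hv => by
      have ih := pairs_append_mid (y :: u') v a b (by simpa using hu) hv
      show (x, y) :: pairs ((y :: u') ++ v) = ((x, y) :: pairs (y :: u')) ++ (a, b) :: pairs v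
      rw [ih]; rfl

theorem stmt11 (n : ℕ) (hn : Odd n) (l : List ℕ) (hl : IsPermOf n l) (j : ℕ)
    (hj1 : 1 ≤ j) (hj2 : j < n)
    (hgap : entry l j < entry l (j - 1) ∧ Odd (entry l (j - 1)) ∧ Odd (entry l j))
    (q : List ℕ) (hq : q = insertGap l j (n + 1)) :
    statB q = statB l - 1 ∧ statC q = statC l + 1 ∧ statD q = statD l + 1 ∧
    statA q = statA l ∧ statE q = statE l := by
  simp only [entry, Nat.add_sub_cancel] at hgap
  rw [insertGap] at hq
  obtain ⟨k, rfl⟩ : ∃ k, j = k + 1 := ⟨j - 1, (Nat.succ_pred_eq_of_pos hj1).symm⟩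
  have hlen : l.length = n := by simpa using hl.length_eq
  have hk1 : k + 1 < l.length := by omega
  have hk : k < l.length := by omega
  simp only [Nat.add_sub_cancel] at hgap
  set a := l.getD k 0 with ha_def
  set b := l.getD (k+1) 0 with hb_def
  obtain ⟨hba, hoa, hob⟩ := hgap
  have hga : l[k]? = some a := by
    rw [ha_def, List.getD_eq_getElem?_getD, List.getElem?_eq_getElem hk]; rfl
  have hgb : l[k+1]? = some b := by
    rw [hb_def, List.getD_eq_getElem?_getD, List.getElem?_eq_getElem hk1]; rfl
  have hmem : a ∈ l := by
    have := List.getElem_mem hk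
    have ha : l[k] = a := by simpa [List.getElem?_eq_getElem hk] using hga
    rwa [ha] at this
  have han : a < n + 1 := by
    have := (List.mem_range'_1.mp ((show l.Perm (List.range' 1 n) from hl).mem_iff.mp hmem)).2
    omega
  have hu_last : (l.take (k+1)).getLast? = some a := by
    rw [List.take_succ, hga]
    exact List.getLast?_concat
  have hv_head : (l.drop (k+1)).head? = some b := by
    rw [List.head?_drop]; exact hgb
  obtain ⟨v', hv'⟩ : ∃ v', l.drop (k+1) = b :: v' := by
    cases h : l.drop (k+1) with
    | nil => rw [h] at hv_head; simp at hv_head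
    | cons c v' => rw [h] at hv_head; simp at hv_head; exact ⟨v', by rw [hv_head]⟩
  have hl_split : l = l.take (k+1) ++ l.drop (k+1) := (List.take_append_drop _ _).symm
  have hpl : pairs l = pairs (l.take (k+1)) ++ (a, b) :: pairs (l.drop (k+1)) := by
    conv_lhs => rw [hl_split]
    exact pairs_append_mid _ _ _ _ hu_last hv_head
  have hpq : pairs q = pairs (l.take (k+1)) ++ (a, n+1) :: (n+1, b) :: pairs (l.drop (k+1)) := by
    rw [hq, pairs_append_mid _ ((n+1) :: l.drop (k+1)) a (n+1) hu_last (by rfl), hv']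
    rfl
  have hhead : q.head? = l.head? := by
    rw [hq]
    conv_rhs => rw [hl_split]
    cases htk : l.take (k+1) with
    | nil => rw [htk] at hu_last; simp at hu_last
    | cons c u'' => simp
  have hlast : q.getLast? = l.getLast? := by
    rw [hq, hv']
    conv_rhs => rw [hl_split, hv']
    rw [List.getLast?_append, List.getLast?_append, List.getLast?_cons_cons]
  have hheadD : ∀ d, q.headD d = l.headD d := fun d => by
    rw [List.headD_eq_head?, List.headD_eq_head?, hhead]
  have hlastD : ∀ d, q.getLastD d = l.getLastD d := fun d => by
    rw [List.getLastD_eq_getLast?, List.getLastD_eq_getLast?, hlast]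
  have hEn1 : Even (n + 1) := hn.add_one
  have hnOn1 : ¬ Odd (n + 1) := Nat.not_odd_iff_even.mpr hEn1
  have hnEa : ¬ Even a := Nat.not_even_iff_odd.mpr hoa
  have hnEb : ¬ Even b := Nat.not_even_iff_odd.mpr hob
  have hnlt : ¬ n + 1 < a := by omega
  have hnab : ¬ a < b := by omega
  have hB : statB q + 1 = statB l := by
    rw [statB, statB, hpl, hpq, hlastD]
    simp only [List.countP_append, List.countP_cons, decide_eq_true_eq, hba, hoa, hnlt, hnOn1,
      hEn1, and_true, true_and, and_false, false_and, if_true, if_false, if_neg, not_false_iff]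
    simp [hnlt, hnOn1]
    ring
  have hC : statC q = statC l + 1 := by
    rw [statC, statC, hpl, hpq, hheadD]
    simp [List.countP_append, List.countP_cons, hnEa, hnOn1, hnab, hEn1, hob]
    ring
  have hD : statD q = statD l + 1 := by
    rw [statD, statD, hpl, hpq]
    simp [List.countP_append, List.countP_cons, hoa, hEn1, han, hnOn1, hnEb]
    ring
  have hA : statA q = statA l := by
    rw [statA, statA, hpl, hpq, hheadD]
    simp [List.countP_append, List.countP_cons, hnEa, hnOn1, hnEb]
  have hE : statE q = statE l := by
    rw [statE, statE, hlastD]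
  exact ⟨Nat.eq_sub_of_add_eq hB, hC, hD, hA, hE⟩
end

section
/- Let n be odd and let p be a permutation of {1,...,n}. Let q be obtained from p by inserting n+1 at the first gap (before p_1). Then A(q) = A(p) + 1, and B(q) = B(p), C(q) = C(p), D(q) = D(p), E(q) = E(p). -/
open List
open scoped Classical

theorem stmt13 (n : ℕ) (hn : Odd n) (l : List ℕ) (hl : IsPermOf n l)
    (q : List ℕ) (hq : q = (n + 1) :: l) :
    statA q = statA l + 1 ∧ statB q = statB l ∧ statC q = statC l ∧
    statD q = statD l ∧ statE q = statE l := by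
  subst hq
  obtain ⟨a, t, rfl⟩ : ∃ a t, l = a :: t := by
    cases l with
    | nil =>
      have h := hl.length_eq
      simp [List.length_range'] at h
      rw [← h] at hn
      simp [Nat.odd_iff] at hn
    | cons a t => exact ⟨a, t, rfl⟩
  have ha : a ∈ List.range' 1 n := hl.mem_iff.mp List.mem_cons_self
  have ha' : 1 ≤ a ∧ a < 1 + n := by
    obtain ⟨i, hi, rfl⟩ := by simpa using List.mem_range'.mp ha
    omega
  have hev : Even (n + 1) := hn.add_one
  have hodd : ¬ Odd (n + 1) := by simpa using hev
  have hlt : ¬ (n + 1 < a) := by omega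
  constructor
  · simp only [statA, pairs, List.zip, List.tail, List.zipWith, List.countP_cons,
      List.headD]
    by_cases h : Even a <;> simp [h, hev, hodd]
  refine ⟨?_, ?_, ?_, ?_⟩ <;>
    simp only [statB, statC, statD, statE, pairs, List.zip, List.tail, List.zipWith,
      List.countP_cons, List.headD, List.getLastD_cons] <;>
    simp [hev, hodd, hlt] <;> by_cases h : Odd a <;> simp [h]
end

section
/- For every n >= 1 and every permutation p of {1,...,n}, if q is obtained from p by inserting n+1 at some gap j in {0,...,n}, then S17(q) = S17(p) if n >= 1 and j is arbitrary, except when p is the identity and j = n, in which case S17(q) = n+1. More precisely: S17(q) = n+1 if p = id_n and n+1 is appended at the end; otherwise S17(q) = S17(p). -/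
open List
open scoped Classical

section S17helpers

lemma idx_mem_take {l : List ℕ} {j m k : ℕ} (hmem : k ∈ l.take j) :
    (insertGap l j m).idxOf k = l.idxOf k ∧ l.idxOf k < j := by
  have h1 : (insertGap l j m).idxOf k = (l.take j).idxOf k :=
    List.idxOf_append_of_mem hmem
  have h2 : l.idxOf k = (l.take j).idxOf k := by
    conv_lhs => rw [← List.take_append_drop j l]
    exact List.idxOf_append_of_mem hmem
  have h3 : (l.take j).idxOf k < (l.take j).length := List.idxOf_lt_length_iff.2 hmem
  have h4 : (l.take j).length ≤ j := by simp [List.length_take]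
  omega

lemma idx_not_mem_take {l : List ℕ} {j m k : ℕ} (hk : k ≠ m) (hmem : k ∉ l.take j)
    (hj : j ≤ l.length) :
    (insertGap l j m).idxOf k = l.idxOf k + 1 ∧ j ≤ l.idxOf k := by
  have hlen : (l.take j).length = j := by simp [List.length_take]; omega
  have h1 : (insertGap l j m).idxOf k = (l.take j).length + (m :: l.drop j).idxOf k :=
    List.idxOf_append_of_notMem hmem
  have h2 : (m :: l.drop j).idxOf k = (l.drop j).idxOf k + 1 :=
    List.idxOf_cons_ne _ (fun h => hk h.symm)
  have h3 : l.idxOf k = (l.take j).length + (l.drop j).idxOf k := by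
    conv_lhs => rw [← List.take_append_drop j l]
    exact List.idxOf_append_of_notMem hmem
  omega

lemma idx_lt_iff {l : List ℕ} {j m : ℕ} (hj : j ≤ l.length) {a b : ℕ}
    (ha : a ≠ m) (hb : b ≠ m) :
    (insertGap l j m).idxOf a < (insertGap l j m).idxOf b ↔ l.idxOf a < l.idxOf b := by
  by_cases hA : a ∈ l.take j <;> by_cases hB : b ∈ l.take j
  · have h1 := idx_mem_take (m := m) hA; have h2 := idx_mem_take (m := m) hB; omega
  · have h1 := idx_mem_take (m := m) hA; have h2 := idx_not_mem_take hb hB hj; omega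
  · have h1 := idx_not_mem_take ha hA hj; have h2 := idx_mem_take (m := m) hB; omega
  · have h1 := idx_not_mem_take ha hA hj; have h2 := idx_not_mem_take hb hB hj; omega

lemma idx_self_insertGap {l : List ℕ} {j m : ℕ} (hm : m ∉ l) (hj : j ≤ l.length) :
    (insertGap l j m).idxOf m = j := by
  have hmem : m ∉ l.take j := fun h => hm (List.mem_of_mem_take h)
  have h1 : (insertGap l j m).idxOf m = (l.take j).length + (m :: l.drop j).idxOf m :=
    List.idxOf_append_of_notMem hmem
  rw [List.idxOf_cons_self] at h1
  simp [List.length_take] at h1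
  omega

lemma idxr (s n i : ℕ) (h : i < n) : (List.range' s n).idxOf (s + i) = i := by
  induction n generalizing s i with
  | zero => omega
  | succ n ih =>
    rw [List.range'_succ]
    cases i with
    | zero => simp
    | succ i =>
      rw [List.idxOf_cons_ne _ (by omega : s ≠ s + (i + 1))]
      have := ih (s + 1) i (by omega)
      rw [show s + (i + 1) = (s + 1) + i by omega, this]

lemma perm_sorted_eq {n : ℕ} {l : List ℕ} (hl : l.Perm (List.range' 1 n))
    (h : ∀ k < n, 1 ≤ k → l.idxOf k < l.idxOf (k + 1)) : l = List.range' 1 n := by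
  have hlen : l.length = n := hl.length_eq.trans (by simp)
  have hmem : ∀ k, 1 ≤ k → k ≤ n → k ∈ l := fun k h1 h2 =>
    hl.mem_iff.2 (List.mem_range'_1.2 ⟨h1, by omega⟩)
  have hidxlt : ∀ k, 1 ≤ k → k ≤ n → l.idxOf k < n := fun k h1 h2 =>
    hlen ▸ List.idxOf_lt_length_iff.2 (hmem k h1 h2)
  have claimA : ∀ d k, 1 ≤ k → k + d ≤ n → l.idxOf k + d ≤ l.idxOf (k + d) := by
    intro d
    induction d with
    | zero => intro k _ _; simp
    | succ d ih =>
      intro k h1 h2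
      have hA := ih k h1 (by omega)
      have hB := h (k + d) (by omega) (by omega)
      have : k + (d + 1) = (k + d) + 1 := by omega
      rw [this]
      omega
  have hidx : ∀ k, 1 ≤ k → k ≤ n → l.idxOf k = k - 1 := by
    intro k h1 h2
    have hA := claimA (k - 1) 1 (le_refl _) (by omega)
    have hB := claimA (n - k) k h1 (by omega)
    have h1n := hidxlt n (by omega) (le_refl n)
    rw [show 1 + (k - 1) = k by omega] at hA
    rw [show k + (n - k) = n by omega] at hB
    omega
  apply List.ext_getElem (by simp [hlen])
  intro i h1 h2
  have hin : i < n := by omega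
  have h4 : l.idxOf (i + 1) = i := by
    have := hidx (i + 1) (by omega) (by omega)
    omega
  have h5 : l.idxOf (i + 1) < l.length := by omega
  have h6 := List.getElem_idxOf h5
  simp only [h4] at h6
  rw [h6, List.getElem_range']
  omega

lemma S17_spec (l : List ℕ) : ∀ k < S17 l, 1 ≤ k → l.idxOf k < l.idxOf (k + 1) := by
  unfold S17
  exact Nat.findGreatest_spec
    (P := fun i => ∀ j < i, 1 ≤ j → l.idxOf j < l.idxOf (j + 1))
    (Nat.zero_le l.length) (fun k hk _ => absurd hk (Nat.not_lt_zero k))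

lemma S17_le (l : List ℕ) : S17 l ≤ l.length := by
  unfold S17
  exact Nat.findGreatest_le _

lemma le_S17 {l : List ℕ} {i : ℕ} (h : i ≤ l.length)
    (h2 : ∀ k < i, 1 ≤ k → l.idxOf k < l.idxOf (k + 1)) : i ≤ S17 l := by
  unfold S17
  exact Nat.le_findGreatest h h2

lemma S17_greatest {l : List ℕ} {i : ℕ} (h : S17 l < i) (h2 : i ≤ l.length) :
    ¬(∀ k < i, 1 ≤ k → l.idxOf k < l.idxOf (k + 1)) := by
  unfold S17 at h
  exact Nat.findGreatest_is_greatest h h2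

end S17helpers

theorem stmt17 (n : ℕ) (hn : 1 ≤ n) (l : List ℕ) (hl : IsPermOf n l) (j : ℕ) (hj : j ≤ n)
    (q : List ℕ) (hq : q = insertGap l j (n + 1)) :
    (l = List.range' 1 n ∧ j = n → S17 q = n + 1) ∧
    (¬(l = List.range' 1 n ∧ j = n) → S17 q = S17 l) := by
  have hlen : l.length = n := hl.length_eq.trans (by simp)
  have hnotmem : (n + 1) ∉ l := fun h => by
    have := hl.mem_iff.1 h
    rw [List.mem_range'_1] at this
    omega
  have hjl : j ≤ l.length := by omega
  have hqlen : q.length = n + 1 := by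
    subst hq
    simp only [insertGap, List.length_append, List.length_cons, List.length_take,
      List.length_drop]
    omega
  have hiff : ∀ a b : ℕ, a ≠ n + 1 → b ≠ n + 1 →
      (q.idxOf a < q.idxOf b ↔ l.idxOf a < l.idxOf b) := by
    intro a b ha hb
    subst hq
    exact idx_lt_iff hjl ha hb
  have hPiff : ∀ i ≤ n, (∀ k < i, 1 ≤ k → q.idxOf k < q.idxOf (k + 1)) ↔
      (∀ k < i, 1 ≤ k → l.idxOf k < l.idxOf (k + 1)) := by
    intro i hi
    constructor
    · intro H k hk hk1
      exact (hiff k (k + 1) (by omega) (by omega)).1 (H k hk hk1)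
    · intro H k hk hk1
      exact (hiff k (k + 1) (by omega) (by omega)).2 (H k hk hk1)
  constructor
  · rintro ⟨hlid, hjn⟩
    have hqform : q = List.range' 1 (n + 1) := by
      subst hq hjn hlid
      rw [insertGap, List.take_of_length_le (by simp), List.drop_of_length_le (by simp)]
      rw [List.range'_concat]
      simp [Nat.add_comm]
    have hPq : ∀ k < n + 1, 1 ≤ k → q.idxOf k < q.idxOf (k + 1) := by
      intro k hk hk1
      rw [hqform]
      have e1 : (List.range' 1 (n + 1)).idxOf k = k - 1 := by
        have := idxr 1 (n + 1) (k - 1) (by omega)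
        rwa [show 1 + (k - 1) = k by omega] at this
      have e2 : (List.range' 1 (n + 1)).idxOf (k + 1) = k := by
        have := idxr 1 (n + 1) k (by omega)
        rwa [show 1 + k = k + 1 by omega] at this
      omega
    have h1 : S17 q ≤ n + 1 := hqlen ▸ S17_le q
    have h2 : n + 1 ≤ S17 q := le_S17 (by omega) hPq
    omega
  · intro hnot
    have hPl := S17_spec l
    have hsn : S17 l ≤ n := hlen ▸ S17_le l
    have hPq := S17_spec q
    have htq : S17 q ≤ n + 1 := hqlen ▸ S17_le q
    have hge : S17 l ≤ S17 q := le_S17 (by omega) ((hPiff _ hsn).2 hPl)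
    rcases Nat.lt_or_ge (S17 l) (S17 q) with hlt | hge2
    · exfalso
      rcases Nat.lt_or_ge (S17 q) (n + 1) with ht | ht
      · exact S17_greatest (l := l) hlt (by omega) ((hPiff _ (by omega)).1 hPq)
      · have hteq : S17 q = n + 1 := by omega
        have hPqn1 : ∀ k < n + 1, 1 ≤ k → q.idxOf k < q.idxOf (k + 1) := hteq ▸ hPq
        have hPln : ∀ k < n, 1 ≤ k → l.idxOf k < l.idxOf (k + 1) :=
          (hPiff n (le_refl n)).1 (fun k hk hk1 => hPqn1 k (by omega) hk1)
        have hlid : l = List.range' 1 n := perm_sorted_eq hl hPln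
        have hjn : j ≠ n := fun h => hnot ⟨hlid, h⟩
        have hidxn1 : q.idxOf (n + 1) = j := by
          subst hq
          exact idx_self_insertGap hnotmem hjl
        have hkey : q.idxOf n < j := by
          have := hPqn1 n (by omega) (by omega)
          rwa [hidxn1] at this
        have hidxln : l.idxOf n = n - 1 := by
          rw [hlid]
          have := idxr 1 n (n - 1) (by omega)
          rwa [show 1 + (n - 1) = n by omega] at this
        by_cases hmem : n ∈ l.take j
        · have h1 := idx_mem_take (m := n + 1) hmem
          rw [← hq] at h1
          omega
        · have h1 := idx_not_mem_take (by omega : n ≠ n + 1) hmem hjl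
          rw [← hq] at h1
          omega
    · omega
end
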